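/- For every t ∈ Ṙ, the C*-algebra SO^◇ is SO_t-compressible modulo every multiplicative linear functional η in the fiber M_t(SO_t): for each x ∈ SO^◇ and ε > 0 there exist a positive element b ∈ SO_t with |η(b)| = ‖b‖ = 1 and an element y ∈ SO_t such that ‖bxb − y‖_{L^∞(ℝ)} < ε. -/

import Mathlib

open MeasureTheory Filter Topology Set

noncomputable section

/-- A Banach function norm on nonnegative measurable functions on ℝ (axioms (A1)–(A5)). -/
structure BFN where
  ρ : (ℝ → ENNReal) → ENNReal
  eq_zero_iff : ∀ f : ℝ → ENNReal, Measurable f → (ρ f = 0 ↔ f =ᵐ[volume] 0)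
  smul_eq : ∀ (c : ENNReal) (f : ℝ → ENNReal), Measurable f → ρ (fun x => c * f x) = c * ρ f
  add_le : ∀ f g : ℝ → ENNReal, Measurable f → Measurable g →
    ρ (fun x => f x + g x) ≤ ρ f + ρ g
  mono : ∀ f g : ℝ → ENNReal, Measurable f → Measurable g →
    (∀ᵐ x ∂volume, g x ≤ f x) → ρ g ≤ ρ f
  fatou : ∀ f : ℕ → ℝ → ENNReal, (∀ n, Measurable (f n)) →
    (∀ᵐ x ∂volume, Monotone fun n => f n x) →
    Tendsto (fun n => ρ (f n)) atTop (𝓝 (ρ fun x => ⨆ n, f n x))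
  indicator_lt_top : ∀ E : Set ℝ, MeasurableSet E → volume E < ⊤ → ρ (E.indicator 1) < ⊤
  loc_L1 : ∀ E : Set ℝ, MeasurableSet E → volume E < ⊤ →
    ∃ C : ENNReal, C ≠ 0 ∧ C ≠ ⊤ ∧ ∀ f : ℝ → ENNReal, Measurable f →
      (∫⁻ x in E, f x) ≤ C * ρ f

namespace BFN

variable (N : BFN)

/-- The (extended) norm of a complex-valued function in the Banach function space. -/
def norm' (f : ℝ → ℂ) : ENNReal := N.ρ fun x => (‖f x‖₊ : ENNReal)

/-- Membership in the Banach function space X(ℝ). -/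
def Mem (f : ℝ → ℂ) : Prop := AEMeasurable f volume ∧ N.norm' f < ⊤

/-- A set of functions is dense in X(ℝ). -/
def DenseIn (S : Set (ℝ → ℂ)) : Prop :=
  ∀ f, N.Mem f → ∀ ε : ℝ, 0 < ε → ∃ g ∈ S, N.norm' (fun x => f x - g x) < ENNReal.ofReal ε

/-- Separability of X(ℝ). -/
def Separable : Prop :=
  ∃ D : Set (ℝ → ℂ), D.Countable ∧ (∀ g ∈ D, N.Mem g) ∧ N.DenseIn D

/-- The associate (Köthe dual) norm ρ'. -/
def assoc : (ℝ → ENNReal) → ENNReal := fun g =>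
  ⨆ f : {f : ℝ → ENNReal // Measurable f ∧ N.ρ f ≤ 1}, ∫⁻ x, f.1 x * g x

end BFN

/-- The non-centered Hardy–Littlewood maximal function (of a nonnegative function). -/
def maximalFn (g : ℝ → ENNReal) (x : ℝ) : ENNReal :=
  ⨆ (a : ℝ) (b : ℝ) (_ : a < b) (_ : x ∈ Set.Icc a b),
    (ENNReal.ofReal (b - a))⁻¹ * ∫⁻ y in Set.Icc a b, g y

/-- Boundedness of the Hardy–Littlewood maximal operator with respect to a function norm. -/
def MaximalBounded (ρ : (ℝ → ENNReal) → ENNReal) : Prop :=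
  ∃ C : ENNReal, C ≠ ⊤ ∧ ∀ g : ℝ → ENNReal, Measurable g → ρ (maximalFn g) ≤ C * ρ g

/-- The standing hypotheses: X(ℝ) separable, M bounded on X(ℝ) and on X'(ℝ). -/
def GoodBFN (N : BFN) : Prop := N.Separable ∧ MaximalBounded N.ρ ∧ MaximalBounded N.assoc

/-- The Fourier convolution operator W⁰(b) = F⁻¹ b F, on nice functions. -/
def W0 (b f : ℝ → ℂ) : ℝ → ℂ :=
  FourierTransformInv.fourierInv (fun x => b x * FourierTransform.fourier f x)

/-- A bounded linear operator on X(ℝ) (linearity up to null functions). -/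
structure OpOn (N : BFN) where
  toFun : (ℝ → ℂ) → (ℝ → ℂ)
  maps_mem : ∀ f, N.Mem f → N.Mem (toFun f)
  map_add_ae : ∀ f g, N.Mem f → N.Mem g →
    N.norm' (fun x => toFun (fun y => f y + g y) x - (toFun f x + toFun g x)) = 0
  map_smul_ae : ∀ (c : ℂ) (f), N.Mem f →
    N.norm' (fun x => toFun (fun y => c * f y) x - c * toFun f x) = 0
  bounded : ∃ C : ENNReal, C ≠ ⊤ ∧ ∀ f, N.Mem f → N.norm' (toFun f) ≤ C * N.norm' f

/-- `T` has operator norm at most `C` on X(ℝ). -/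
def OpNormLe (N : BFN) (T : OpOn N) (C : ENNReal) : Prop :=
  ∀ f, N.Mem f → N.norm' (T.toFun f) ≤ C * N.norm' f

/-- `T` is (an extension of) the Fourier convolution operator with symbol `b`:
it agrees a.e. with `W⁰(b)` on `L¹ ∩ L² ∩ X`. -/
def IsMultiplierOp (N : BFN) (b : ℝ → ℂ) (T : OpOn N) : Prop :=
  ∀ f : ℝ → ℂ, Integrable f volume → MemLp f 2 volume → N.Mem f →
    N.norm' (fun x => T.toFun f x - W0 b f x) = 0

/-- `b` is a Fourier multiplier on X(ℝ). -/
def IsMultiplier (N : BFN) (b : ℝ → ℂ) : Prop :=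
  MemLp b ⊤ volume ∧ ∃ T : OpOn N, IsMultiplierOp N b T

/-- The multiplier norm ‖b‖_{M_X} = ‖W⁰(b)‖_{B(X)}. -/
def mNorm (N : BFN) (b : ℝ → ℂ) : ENNReal :=
  sInf {C | ∃ T : OpOn N, IsMultiplierOp N b T ∧ OpNormLe N T C}

/-- A map of functions is a compact operator on X(ℝ): it maps X to X and the image of the
unit ball is totally bounded. -/
def CompactMap (N : BFN) (T : (ℝ → ℂ) → (ℝ → ℂ)) : Prop :=
  (∀ f, N.Mem f → N.Mem (T f)) ∧
  ∀ ε : ℝ, 0 < ε → ∃ S : Set (ℝ → ℂ), S.Finite ∧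
    ∀ f, N.Mem f → N.norm' f ≤ 1 → ∃ g ∈ S, N.norm' (fun x => T f x - g x) < ENNReal.ofReal ε

/-- A bounded linear operator on X(ℝ) is compact. -/
def IsCompactOp (N : BFN) (K : OpOn N) : Prop := CompactMap N K.toFun

/-- The oscillation of `f` over a set `E`. -/
def osc (f : ℝ → ℂ) (E : Set ℝ) : ENNReal :=
  ⨆ s ∈ E, ⨆ t ∈ E, (‖f s - f t‖₊ : ENNReal)

/-- `f` slowly oscillates at a finite point `lam`. -/
def SlowOscAt (f : ℝ → ℂ) (lam : ℝ) : Prop :=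
  ∀ r : ℝ, 0 < r → r < 1 → ∀ ε : ℝ, 0 < ε → ∃ δ : ℝ, 0 < δ ∧ ∀ x : ℝ, 0 < x → x < δ →
    osc f (Set.Icc (lam - x) (lam - r * x) ∪ Set.Icc (lam + r * x) (lam + x)) <
      ENNReal.ofReal ε

/-- `f` slowly oscillates at ∞. -/
def SlowOscAtInf (f : ℝ → ℂ) : Prop :=
  ∀ r : ℝ, 0 < r → r < 1 → ∀ ε : ℝ, 0 < ε → ∃ R : ℝ, 0 < R ∧ ∀ x : ℝ, R < x →
    osc f (Set.Icc (-x) (-(r * x)) ∪ Set.Icc (r * x) x) < ENNReal.ofReal ε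

/-- Boundedness of a function. -/
def Bdd (f : ℝ → ℂ) : Prop := ∃ M : ℝ, ∀ x, ‖f x‖ ≤ M

/-- The algebra SO_t, for t ∈ Ṙ = ℝ ∪ {∞} (encoded as `Option ℝ`, `none` = ∞):
bounded functions, continuous on Ṙ \ {t}, slowly oscillating at t. -/
def SO : Option ℝ → (ℝ → ℂ) → Prop
  | some lam, f => Bdd f ∧ ContinuousOn f {lam}ᶜ ∧
      (∃ L : ℂ, Tendsto f (cocompact ℝ) (𝓝 L)) ∧ SlowOscAt f lam
  | none, f => Bdd f ∧ Continuous f ∧ SlowOscAtInf f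

/-- The operator D_λ a (x) = (x − λ) a'(x). -/
def Dop (lam : ℝ) (a : ℝ → ℂ) : ℝ → ℂ := fun x => ((x : ℂ) - (lam : ℂ)) * deriv a x

/-- The operator D_∞ a (x) = x a'(x). -/
def DopInf (a : ℝ → ℂ) : ℝ → ℂ := fun x => (x : ℂ) * deriv a x

/-- The algebra SO_t^3 of C³ slowly oscillating functions with
lim_{x→t} (D_t^k a)(x) = 0 for k = 1,2,3. -/
def SO3 : Option ℝ → (ℝ → ℂ) → Prop
  | some lam, a => SO (some lam) a ∧ ContDiffOn ℝ 3 a {lam}ᶜ ∧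
      ∀ k : ℕ, 1 ≤ k → k ≤ 3 → Tendsto ((Dop lam)^[k] a) (𝓝[≠] lam) (𝓝 0)
  | none, a => SO none a ∧ ContDiff ℝ 3 a ∧
      ∀ k : ℕ, 1 ≤ k → k ≤ 3 → Tendsto (DopInf^[k] a) (cocompact ℝ) (𝓝 0)

/-- SO_{t,X(ℝ)}: the closure of SO_t^3 in the multiplier norm of X(ℝ). -/
def SOX (N : BFN) (t : Option ℝ) (b : ℝ → ℂ) : Prop :=
  IsMultiplier N b ∧ ∀ ε : ℝ, 0 < ε → ∃ a, SO3 t a ∧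
    IsMultiplier N (fun x => b x - a x) ∧
    mNorm N (fun x => b x - a x) < ENNReal.ofReal ε

/-- The *-algebra generated by all the SO_t, t ∈ Ṙ. -/
inductive SOgen : (ℝ → ℂ) → Prop
  | base (t : Option ℝ) (f : ℝ → ℂ) : SO t f → SOgen f
  | add {f g : ℝ → ℂ} : SOgen f → SOgen g → SOgen (fun x => f x + g x)
  | mul {f g : ℝ → ℂ} : SOgen f → SOgen g → SOgen (fun x => f x * g x)
  | smul (c : ℂ) {f : ℝ → ℂ} : SOgen f → SOgen (fun x => c * f x)
  | star {f : ℝ → ℂ} : SOgen f → SOgen (fun x => starRingEnd ℂ (f x))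

/-- SO^◇: the smallest C*-subalgebra of L^∞(ℝ) containing all SO_t. -/
def SOdiamond (f : ℝ → ℂ) : Prop :=
  MemLp f ⊤ volume ∧ ∀ ε : ℝ, 0 < ε → ∃ g, SOgen g ∧
    eLpNorm (fun x => f x - g x) ⊤ volume < ENNReal.ofReal ε

/-- The algebra generated by all the SO_{t,X(ℝ)}, t ∈ Ṙ. -/
inductive SOXgen (N : BFN) : (ℝ → ℂ) → Prop
  | base (t : Option ℝ) (f : ℝ → ℂ) : SOX N t f → SOXgen N f
  | add {f g : ℝ → ℂ} : SOXgen N f → SOXgen N g → SOXgen N (fun x => f x + g x)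
  | mul {f g : ℝ → ℂ} : SOXgen N f → SOXgen N g → SOXgen N (fun x => f x * g x)
  | smul (c : ℂ) {f : ℝ → ℂ} : SOXgen N f → SOXgen N (fun x => c * f x)

/-- SO_{X(ℝ)}^◇: the smallest Banach subalgebra of M_{X(ℝ)} containing all SO_{t,X(ℝ)}. -/
def SOXdiamond (N : BFN) (b : ℝ → ℂ) : Prop :=
  IsMultiplier N b ∧ ∀ ε : ℝ, 0 < ε → ∃ g, SOXgen N g ∧
    IsMultiplier N (fun x => b x - g x) ∧
    mNorm N (fun x => b x - g x) < ENNReal.ofReal ε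

/-- A multiplicative linear functional (character) on a set `S` of functions
(which respects a.e. equality, as elements of function algebras are a.e.-classes). -/
structure CharOn (S : Set (ℝ → ℂ)) where
  φ : (ℝ → ℂ) → ℂ
  map_ae : ∀ f g : ℝ → ℂ, f ∈ S → g ∈ S → f =ᵐ[volume] g → φ f = φ g
  map_add : ∀ f ∈ S, ∀ g ∈ S, φ (fun x => f x + g x) = φ f + φ g
  map_mul : ∀ f ∈ S, ∀ g ∈ S, φ (fun x => f x * g x) = φ f * φ g
  map_smul : ∀ (c : ℂ), ∀ f ∈ S, φ (fun x => c * f x) = c * φ f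
  map_one : φ (fun _ => 1) = 1

/-- The algebra C(Ṙ): continuous functions on ℝ having a limit at ∞. -/
def CRdot (f : ℝ → ℂ) : Prop := Continuous f ∧ ∃ L : ℂ, Tendsto f (cocompact ℝ) (𝓝 L)

/-- The character `χ` on `S` lies in the fiber over `t ∈ Ṙ`: its restriction to C(Ṙ)
is the evaluation at `t`. -/
def InFiber (S : Set (ℝ → ℂ)) (χ : CharOn S) : Option ℝ → Prop
  | some lam => ∀ f, f ∈ S → CRdot f → χ.φ f = f lam
  | none => ∀ f, f ∈ S → CRdot f → ∀ L : ℂ, Tendsto f (cocompact ℝ) (𝓝 L) → χ.φ f = L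

/-- The spectrum of `f` in the function algebra `S` (invertibility understood a.e.). -/
def specIn (S : Set (ℝ → ℂ)) (f : ℝ → ℂ) : Set ℂ :=
  {z | ¬ ∃ g ∈ S, (fun x => (f x - z) * g x) =ᵐ[volume] (fun _ => (1 : ℂ))}

/-- Positivity of an element of the function algebra `S`: self-adjoint with
spectrum contained in [0, ∞). -/
def IsPositiveIn (S : Set (ℝ → ℂ)) (f : ℝ → ℂ) : Prop :=
  (∀ x, (f x).im = 0) ∧ specIn S f ⊆ {z : ℂ | 0 ≤ z.re ∧ z.im = 0}

/-- A character on a set `S` of operators which factors through the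
compact-equivalence relation `R` (i.e. a character of the Calkin image). -/
structure CharOnOps (S : Set ((ℝ → ℂ) → (ℝ → ℂ)))
    (R : ((ℝ → ℂ) → (ℝ → ℂ)) → ((ℝ → ℂ) → (ℝ → ℂ)) → Prop) where
  φ : ((ℝ → ℂ) → (ℝ → ℂ)) → ℂ
  map_add : ∀ T ∈ S, ∀ U ∈ S, φ (fun f x => T f x + U f x) = φ T + φ U
  map_mul : ∀ T ∈ S, ∀ U ∈ S, φ (fun f => T (U f)) = φ T * φ U
  map_smul : ∀ (c : ℂ), ∀ T ∈ S, φ (fun f x => c * T f x) = c * φ T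
  congr : ∀ T ∈ S, ∀ U ∈ S, R T U → φ T = φ U

section OscLemmas

variable {f g : ℝ → ℂ} {E : Set ℝ}

lemma osc_le' {C : ENNReal} (h : ∀ s ∈ E, ∀ u ∈ E, (‖f s - f u‖₊ : ENNReal) ≤ C) :
    osc f E ≤ C :=
  iSup₂_le fun s hs => iSup₂_le fun u hu => h s hs u hu

lemma nnnorm_sub_le_osc {s u : ℝ} (hs : s ∈ E) (hu : u ∈ E) :
    (‖f s - f u‖₊ : ENNReal) ≤ osc f E :=
  le_iSup₂_of_le s hs (le_iSup₂_of_le u hu le_rfl)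

lemma coe_nnnorm_eq (a : ℂ) : (‖a‖₊ : ENNReal) = ENNReal.ofReal ‖a‖ :=
  (ofReal_norm_eq_enorm a).symm

lemma osc_le_two_mul {c : ℂ} {a : ℝ} (ha : 0 ≤ a) (h : ∀ s ∈ E, ‖f s - c‖ ≤ a) :
    osc f E ≤ ENNReal.ofReal (2 * a) := by
  refine osc_le' fun s hs u hu => ?_
  have h1 : ‖f s - f u‖ ≤ 2 * a := by
    have h2 := h s hs
    have h3 := h u hu
    calc ‖f s - f u‖ = ‖(f s - c) - (f u - c)‖ := by rw [sub_sub_sub_cancel_right]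
      _ ≤ ‖f s - c‖ + ‖f u - c‖ := norm_sub_le _ _
      _ ≤ 2 * a := by linarith
  rw [coe_nnnorm_eq]
  exact ENNReal.ofReal_le_ofReal h1

lemma osc_add_le : osc (fun x => f x + g x) E ≤ osc f E + osc g E := by
  refine osc_le' fun s hs u hu => ?_
  show (‖(f s + g s) - (f u + g u)‖₊ : ENNReal) ≤ _
  have h1 : (f s + g s) - (f u + g u) = (f s - f u) + (g s - g u) := by ring
  rw [h1]
  calc (‖(f s - f u) + (g s - g u)‖₊ : ENNReal)
      ≤ (‖f s - f u‖₊ : ENNReal) + (‖g s - g u‖₊ : ENNReal) := by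
        exact_mod_cast nnnorm_add_le _ _
    _ ≤ osc f E + osc g E := add_le_add (nnnorm_sub_le_osc hs hu) (nnnorm_sub_le_osc hs hu)

lemma osc_mul_le {Mf Mg : ℝ} (hf : ∀ x, ‖f x‖ ≤ Mf) (hg : ∀ x, ‖g x‖ ≤ Mg) :
    osc (fun x => f x * g x) E ≤
      ENNReal.ofReal Mf * osc g E + osc f E * ENNReal.ofReal Mg := by
  refine osc_le' fun s hs u hu => ?_
  show (‖f s * g s - f u * g u‖₊ : ENNReal) ≤ _
  have h1 : f s * g s - f u * g u = f s * (g s - g u) + (f s - f u) * g u := by ring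
  rw [h1]
  calc (‖f s * (g s - g u) + (f s - f u) * g u‖₊ : ENNReal)
      ≤ (‖f s * (g s - g u)‖₊ : ENNReal) + (‖(f s - f u) * g u‖₊ : ENNReal) := by
        exact_mod_cast nnnorm_add_le _ _
    _ ≤ ENNReal.ofReal Mf * osc g E + osc f E * ENNReal.ofReal Mg := by
        refine add_le_add ?_ ?_
        · rw [nnnorm_mul, ENNReal.coe_mul]
          refine mul_le_mul' ?_ (nnnorm_sub_le_osc hs hu)
          rw [coe_nnnorm_eq]; exact ENNReal.ofReal_le_ofReal (hf s)
        · rw [nnnorm_mul, ENNReal.coe_mul]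
          refine mul_le_mul' (nnnorm_sub_le_osc hs hu) ?_
          rw [coe_nnnorm_eq]; exact ENNReal.ofReal_le_ofReal (hg u)

lemma osc_conj_le : osc (fun x => (starRingEnd ℂ) (f x)) E ≤ osc f E := by
  refine osc_le' fun s hs u hu => ?_
  show (‖(starRingEnd ℂ) (f s) - (starRingEnd ℂ) (f u)‖₊ : ENNReal) ≤ _
  rw [← map_sub, RCLike.nnnorm_conj]
  exact nnnorm_sub_le_osc hs hu

end OscLemmas
section SlowOscClosure

variable {f g : ℝ → ℂ} {lam : ℝ}

lemma SlowOscAt.add' (hf : SlowOscAt f lam) (hg : SlowOscAt g lam) :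
    SlowOscAt (fun x => f x + g x) lam := by
  intro r hr hr1 ε hε
  obtain ⟨δ1, hδ1, H1⟩ := hf r hr hr1 (ε / 2) (by linarith)
  obtain ⟨δ2, hδ2, H2⟩ := hg r hr hr1 (ε / 2) (by linarith)
  refine ⟨min δ1 δ2, lt_min hδ1 hδ2, fun x hx hxδ => ?_⟩
  have e1 := H1 x hx (lt_of_lt_of_le hxδ (min_le_left _ _))
  have e2 := H2 x hx (lt_of_lt_of_le hxδ (min_le_right _ _))
  calc osc (fun x => f x + g x) _ ≤ osc f _ + osc g _ := osc_add_le
    _ < ENNReal.ofReal (ε / 2) + ENNReal.ofReal (ε / 2) := ENNReal.add_lt_add e1 e2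
    _ = ENNReal.ofReal ε := by
        rw [← ENNReal.ofReal_add (by linarith) (by linarith)]; norm_num

lemma SlowOscAt.mul' {Mf Mg : ℝ} (hbf : ∀ x, ‖f x‖ ≤ Mf) (hbg : ∀ x, ‖g x‖ ≤ Mg)
    (hf : SlowOscAt f lam) (hg : SlowOscAt g lam) :
    SlowOscAt (fun x => f x * g x) lam := by
  have hMf0 : 0 ≤ Mf := (norm_nonneg (f 0)).trans (hbf 0)
  have hMg0 : 0 ≤ Mg := (norm_nonneg (g 0)).trans (hbg 0)
  set M : ℝ := max Mf Mg + 1 with hMdef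
  have hM0 : 0 < M := by
    have := le_max_left Mf Mg; simp only [hMdef]; linarith
  intro r hr hr1 ε hε
  obtain ⟨δ1, hδ1, H1⟩ := hf r hr hr1 (ε / (4 * M)) (by positivity)
  obtain ⟨δ2, hδ2, H2⟩ := hg r hr hr1 (ε / (4 * M)) (by positivity)
  refine ⟨min δ1 δ2, lt_min hδ1 hδ2, fun x hx hxδ => ?_⟩
  have e1 := H1 x hx (lt_of_lt_of_le hxδ (min_le_left _ _))
  have e2 := H2 x hx (lt_of_lt_of_le hxδ (min_le_right _ _))
  have hMfM : Mf ≤ M := by have := le_max_left Mf Mg; simp only [hMdef]; linarith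
  have hMgM : Mg ≤ M := by have := le_max_right Mf Mg; simp only [hMdef]; linarith
  calc osc (fun x => f x * g x) _
      ≤ ENNReal.ofReal Mf * osc g _ + osc f _ * ENNReal.ofReal Mg := osc_mul_le hbf hbg
    _ ≤ ENNReal.ofReal M * ENNReal.ofReal (ε / (4 * M)) +
        ENNReal.ofReal (ε / (4 * M)) * ENNReal.ofReal M := by
        refine add_le_add (mul_le_mul' (ENNReal.ofReal_le_ofReal hMfM) e2.le)
          (mul_le_mul' e1.le (ENNReal.ofReal_le_ofReal hMgM))
    _ = ENNReal.ofReal (ε / 2) := by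
        rw [← ENNReal.ofReal_mul hM0.le, ← ENNReal.ofReal_mul (by positivity),
          ← ENNReal.ofReal_add (by positivity) (by positivity)]
        congr 1
        field_simp
        ring
    _ < ENNReal.ofReal ε := (ENNReal.ofReal_lt_ofReal_iff hε).mpr (by linarith)

lemma SlowOscAt.conj' (hf : SlowOscAt f lam) :
    SlowOscAt (fun x => (starRingEnd ℂ) (f x)) lam := by
  intro r hr hr1 ε hε
  obtain ⟨δ, hδ, H⟩ := hf r hr hr1 ε hε
  exact ⟨δ, hδ, fun x hx hxδ => lt_of_le_of_lt osc_conj_le (H x hx hxδ)⟩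

lemma SlowOscAtInf.add' (hf : SlowOscAtInf f) (hg : SlowOscAtInf g) :
    SlowOscAtInf (fun x => f x + g x) := by
  intro r hr hr1 ε hε
  obtain ⟨R1, hR1, H1⟩ := hf r hr hr1 (ε / 2) (by linarith)
  obtain ⟨R2, hR2, H2⟩ := hg r hr hr1 (ε / 2) (by linarith)
  refine ⟨max R1 R2, lt_of_lt_of_le hR1 (le_max_left _ _), fun x hx => ?_⟩
  have e1 := H1 x (lt_of_le_of_lt (le_max_left _ _) hx)
  have e2 := H2 x (lt_of_le_of_lt (le_max_right _ _) hx)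
  calc osc (fun x => f x + g x) _ ≤ osc f _ + osc g _ := osc_add_le
    _ < ENNReal.ofReal (ε / 2) + ENNReal.ofReal (ε / 2) := ENNReal.add_lt_add e1 e2
    _ = ENNReal.ofReal ε := by
        rw [← ENNReal.ofReal_add (by linarith) (by linarith)]; norm_num

lemma SlowOscAtInf.mul' {Mf Mg : ℝ} (hbf : ∀ x, ‖f x‖ ≤ Mf) (hbg : ∀ x, ‖g x‖ ≤ Mg)
    (hf : SlowOscAtInf f) (hg : SlowOscAtInf g) :
    SlowOscAtInf (fun x => f x * g x) := by
  have hMf0 : 0 ≤ Mf := (norm_nonneg (f 0)).trans (hbf 0)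
  have hMg0 : 0 ≤ Mg := (norm_nonneg (g 0)).trans (hbg 0)
  set M : ℝ := max Mf Mg + 1 with hMdef
  have hM0 : 0 < M := by
    have := le_max_left Mf Mg; simp only [hMdef]; linarith
  intro r hr hr1 ε hε
  obtain ⟨R1, hR1, H1⟩ := hf r hr hr1 (ε / (4 * M)) (by positivity)
  obtain ⟨R2, hR2, H2⟩ := hg r hr hr1 (ε / (4 * M)) (by positivity)
  refine ⟨max R1 R2, lt_of_lt_of_le hR1 (le_max_left _ _), fun x hx => ?_⟩
  have e1 := H1 x (lt_of_le_of_lt (le_max_left _ _) hx)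
  have e2 := H2 x (lt_of_le_of_lt (le_max_right _ _) hx)
  have hMfM : Mf ≤ M := by have := le_max_left Mf Mg; simp only [hMdef]; linarith
  have hMgM : Mg ≤ M := by have := le_max_right Mf Mg; simp only [hMdef]; linarith
  calc osc (fun x => f x * g x) _
      ≤ ENNReal.ofReal Mf * osc g _ + osc f _ * ENNReal.ofReal Mg := osc_mul_le hbf hbg
    _ ≤ ENNReal.ofReal M * ENNReal.ofReal (ε / (4 * M)) +
        ENNReal.ofReal (ε / (4 * M)) * ENNReal.ofReal M := by
        refine add_le_add (mul_le_mul' (ENNReal.ofReal_le_ofReal hMfM) e2.le)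
          (mul_le_mul' e1.le (ENNReal.ofReal_le_ofReal hMgM))
    _ = ENNReal.ofReal (ε / 2) := by
        rw [← ENNReal.ofReal_mul hM0.le, ← ENNReal.ofReal_mul (by positivity),
          ← ENNReal.ofReal_add (by positivity) (by positivity)]
        congr 1
        field_simp
        ring
    _ < ENNReal.ofReal ε := (ENNReal.ofReal_lt_ofReal_iff hε).mpr (by linarith)

lemma SlowOscAtInf.conj' (hf : SlowOscAtInf f) :
    SlowOscAtInf (fun x => (starRingEnd ℂ) (f x)) := by
  intro r hr hr1 ε hε
  obtain ⟨R, hR, H⟩ := hf r hr hr1 ε hε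
  exact ⟨R, hR, fun x hx => lt_of_le_of_lt osc_conj_le (H x hx)⟩

lemma slowOscAt_of_continuousAt (h : ContinuousAt f lam) : SlowOscAt f lam := by
  intro r hr hr1 ε hε
  obtain ⟨δ, hδ, H⟩ := Metric.continuousAt_iff.mp h (ε / 3) (by linarith)
  refine ⟨δ, hδ, fun x hx hxδ => ?_⟩
  have hsub : ∀ s ∈ Icc (lam - x) (lam - r * x) ∪ Icc (lam + r * x) (lam + x),
      ‖f s - f lam‖ ≤ ε / 3 := by
    intro s hs
    have habs : |s - lam| ≤ x := by
      rcases hs with h' | h' <;> rcases h' with ⟨h1, h2⟩ <;> rw [abs_le] <;>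
        constructor <;> nlinarith [mul_pos hr hx]
    have hd : dist s lam < δ := by rw [Real.dist_eq]; linarith
    have := H hd
    rw [dist_eq_norm] at this
    linarith
  calc osc f _ ≤ ENNReal.ofReal (2 * (ε / 3)) := osc_le_two_mul (by linarith) hsub
    _ < ENNReal.ofReal ε := (ENNReal.ofReal_lt_ofReal_iff hε).mpr (by linarith)

lemma slowOscAtInf_of_tendsto {L : ℂ} (h : Tendsto f (cocompact ℝ) (𝓝 L)) :
    SlowOscAtInf f := by
  intro r hr hr1 ε hε
  have h1 : ∀ᶠ x in cocompact ℝ, dist (f x) L < ε / 3 :=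
    Metric.tendsto_nhds.mp h (ε / 3) (by linarith)
  obtain ⟨K, hK, hKs⟩ := mem_cocompact.mp h1
  obtain ⟨R0, hR0⟩ := hK.isBounded.subset_closedBall 0
  refine ⟨max 1 (|R0| / r), lt_of_lt_of_le one_pos (le_max_left _ _), fun x hx => ?_⟩
  have hrx : |R0| < r * x := by
    have h2 : |R0| ≤ r * max 1 (|R0| / r) := by
      have h3 : r * (|R0| / r) = |R0| := by field_simp
      calc |R0| = r * (|R0| / r) := h3.symm
        _ ≤ r * max 1 (|R0| / r) := by
            exact mul_le_mul_of_nonneg_left (le_max_right _ _) hr.le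
    have h4 : r * max 1 (|R0| / r) < r * x := mul_lt_mul_of_pos_left hx hr
    linarith
  have hsub : ∀ s ∈ Icc (-x) (-(r * x)) ∪ Icc (r * x) x, ‖f s - L‖ ≤ ε / 3 := by
    intro s hs
    have h2 : r * x ≤ |s| := by
      rcases hs with h' | h' <;> rcases h' with ⟨h1', h2'⟩
      · exact le_abs.mpr (Or.inr (by linarith))
      · exact le_abs.mpr (Or.inl h1')
    have hsK : s ∉ K := by
      intro hsK
      have := hR0 hsK
      rw [Metric.mem_closedBall, Real.dist_eq, sub_zero] at this
      have := le_abs_self R0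
      linarith
    have := hKs hsK
    simp only [mem_setOf_eq] at this
    rw [dist_eq_norm] at this
    linarith
  calc osc f _ ≤ ENNReal.ofReal (2 * (ε / 3)) := osc_le_two_mul (by linarith) hsub
    _ < ENNReal.ofReal ε := (ENNReal.ofReal_lt_ofReal_iff hε).mpr (by linarith)

end SlowOscClosure

section BddSO

variable {f g : ℝ → ℂ}

lemma Bdd.add' (hf : Bdd f) (hg : Bdd g) : Bdd (fun x => f x + g x) := by
  obtain ⟨M1, h1⟩ := hf; obtain ⟨M2, h2⟩ := hg
  exact ⟨M1 + M2, fun x => (norm_add_le _ _).trans (add_le_add (h1 x) (h2 x))⟩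

lemma Bdd.mul' (hf : Bdd f) (hg : Bdd g) : Bdd (fun x => f x * g x) := by
  obtain ⟨M1, h1⟩ := hf; obtain ⟨M2, h2⟩ := hg
  have hM1 : 0 ≤ M1 := (norm_nonneg (f 0)).trans (h1 0)
  refine ⟨M1 * M2, fun x => ?_⟩
  rw [norm_mul]
  exact mul_le_mul (h1 x) (h2 x) (norm_nonneg _) hM1

lemma Bdd.conj' (hf : Bdd f) : Bdd (fun x => (starRingEnd ℂ) (f x)) := by
  obtain ⟨M1, h1⟩ := hf
  exact ⟨M1, fun x => by rw [RCLike.norm_conj]; exact h1 x⟩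

lemma Bdd.of_tendsto (hc : Continuous f) {L : ℂ} (hl : Tendsto f (cocompact ℝ) (𝓝 L)) :
    Bdd f := by
  have h1 : ∀ᶠ x in cocompact ℝ, dist (f x) L < 1 := Metric.tendsto_nhds.mp hl 1 one_pos
  obtain ⟨K, hK, hKs⟩ := mem_cocompact.mp h1
  obtain ⟨C, hC⟩ := hK.exists_bound_of_continuousOn hc.continuousOn
  refine ⟨max C (‖L‖ + 1), fun x => ?_⟩
  by_cases hx : x ∈ K
  · exact le_max_of_le_left (hC x hx)
  · have h2 := hKs hx
    simp only [mem_setOf_eq] at h2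
    have h3 : ‖f x‖ - ‖L‖ ≤ dist (f x) L := by
      rw [dist_eq_norm]; exact norm_sub_norm_le _ _
    exact le_max_of_le_right (by linarith)

lemma SO.bdd {t : Option ℝ} (h : SO t f) : Bdd f := by cases t <;> exact h.1

lemma SO.add {t : Option ℝ} (hf : SO t f) (hg : SO t g) : SO t (fun x => f x + g x) := by
  cases t with
  | some lam =>
    obtain ⟨hb1, hc1, ⟨L1, hl1⟩, hs1⟩ := hf
    obtain ⟨hb2, hc2, ⟨L2, hl2⟩, hs2⟩ := hg
    exact ⟨hb1.add' hb2, hc1.add hc2, ⟨L1 + L2, hl1.add hl2⟩, hs1.add' hs2⟩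
  | none =>
    obtain ⟨hb1, hc1, hs1⟩ := hf
    obtain ⟨hb2, hc2, hs2⟩ := hg
    exact ⟨hb1.add' hb2, hc1.add hc2, hs1.add' hs2⟩

lemma SO.mul {t : Option ℝ} (hf : SO t f) (hg : SO t g) : SO t (fun x => f x * g x) := by
  cases t with
  | some lam =>
    obtain ⟨hb1, hc1, ⟨L1, hl1⟩, hs1⟩ := hf
    obtain ⟨hb2, hc2, ⟨L2, hl2⟩, hs2⟩ := hg
    obtain ⟨M1, hM1⟩ := hb1
    obtain ⟨M2, hM2⟩ := hb2
    exact ⟨Bdd.mul' ⟨M1, hM1⟩ ⟨M2, hM2⟩, hc1.mul hc2, ⟨L1 * L2, hl1.mul hl2⟩,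
      hs1.mul' hM1 hM2 hs2⟩
  | none =>
    obtain ⟨hb1, hc1, hs1⟩ := hf
    obtain ⟨hb2, hc2, hs2⟩ := hg
    obtain ⟨M1, hM1⟩ := hb1
    obtain ⟨M2, hM2⟩ := hb2
    exact ⟨Bdd.mul' ⟨M1, hM1⟩ ⟨M2, hM2⟩, hc1.mul hc2, hs1.mul' hM1 hM2 hs2⟩

lemma SO.conj {t : Option ℝ} (hf : SO t f) : SO t (fun x => (starRingEnd ℂ) (f x)) := by
  cases t with
  | some lam =>
    obtain ⟨hb1, hc1, ⟨L1, hl1⟩, hs1⟩ := hf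
    exact ⟨hb1.conj', (RCLike.continuous_conj).comp_continuousOn hc1,
      ⟨(starRingEnd ℂ) L1, ((RCLike.continuous_conj).tendsto L1).comp hl1⟩, hs1.conj'⟩
  | none =>
    obtain ⟨hb1, hc1, hs1⟩ := hf
    exact ⟨hb1.conj', (RCLike.continuous_conj).comp hc1, hs1.conj'⟩

lemma CRdot.so {t : Option ℝ} (h : CRdot f) : SO t f := by
  obtain ⟨hc, L, hl⟩ := h
  cases t with
  | some lam =>
    exact ⟨Bdd.of_tendsto hc hl, hc.continuousOn, ⟨L, hl⟩,
      slowOscAt_of_continuousAt hc.continuousAt⟩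
  | none => exact ⟨Bdd.of_tendsto hc hl, hc, slowOscAtInf_of_tendsto hl⟩

lemma CRdot.const (c : ℂ) : CRdot (fun _ => c) := ⟨continuous_const, c, tendsto_const_nhds⟩

end BddSO

section Vanish

def Vanish : Option ℝ → (ℝ → ℂ) → Prop
  | some lam => fun r => Bdd r ∧ Tendsto r (𝓝[≠] lam) (𝓝 0)
  | none => fun r => Bdd r ∧ Tendsto r (cocompact ℝ) (𝓝 0)

variable {t : Option ℝ} {r u : ℝ → ℂ}

lemma Vanish.bdd (h : Vanish t r) : Bdd r := by cases t <;> exact h.1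

lemma Vanish.zero : Vanish t (fun _ => 0) := by
  cases t <;> exact ⟨⟨0, fun x => by simp⟩, tendsto_const_nhds⟩

lemma Vanish.add (hr : Vanish t r) (hu : Vanish t u) : Vanish t (fun x => r x + u x) := by
  cases t <;> exact ⟨hr.1.add' hu.1, by simpa using hr.2.add hu.2⟩

lemma tendsto_mul_bdd {l : Filter ℝ} (h : Tendsto r l (𝓝 0)) {M : ℝ}
    (hM : ∀ x, ‖u x‖ ≤ M) : Tendsto (fun x => r x * u x) l (𝓝 0) := by
  have h1 : Tendsto (fun x => ‖r x‖ * M) l (𝓝 0) := by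
    have h2 : Tendsto (fun x => ‖r x‖) l (𝓝 0) := by simpa using h.norm
    simpa using h2.mul_const M
  exact squeeze_zero_norm (fun x => by
    rw [norm_mul]; exact mul_le_mul_of_nonneg_left (hM x) (norm_nonneg _)) h1

lemma Vanish.mul_bdd (hr : Vanish t r) (hu : Bdd u) : Vanish t (fun x => r x * u x) := by
  obtain ⟨M, hM⟩ := hu
  cases t <;> exact ⟨hr.1.mul' ⟨M, hM⟩, tendsto_mul_bdd hr.2 hM⟩

lemma Vanish.bdd_mul (hu : Bdd u) (hr : Vanish t r) : Vanish t (fun x => u x * r x) := by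
  have h1 := hr.mul_bdd hu
  have h2 : (fun x => r x * u x) = (fun x => u x * r x) := funext fun x => mul_comm _ _
  rwa [h2] at h1

lemma Vanish.conj (hr : Vanish t r) : Vanish t (fun x => (starRingEnd ℂ) (r x)) := by
  have key : ∀ l : Filter ℝ, Tendsto r l (𝓝 0) →
      Tendsto (fun x => (starRingEnd ℂ) (r x)) l (𝓝 0) := by
    intro l h
    have := ((RCLike.continuous_conj (K := ℂ)).tendsto 0).comp h
    simpa [Function.comp_def] using this
  cases t <;> exact ⟨hr.1.conj', key _ hr.2⟩

lemma decomp_base (t μ : Option ℝ) (f : ℝ → ℂ) (hf : SO μ f) :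
    ∃ h r, SO t h ∧ Vanish t r ∧ ∀ x, f x = h x + r x := by
  by_cases hμt : μ = t
  · exact ⟨f, fun _ => 0, hμt ▸ hf, Vanish.zero, fun x => by simp⟩
  · have hbdd : Bdd f := hf.bdd
    obtain ⟨M, hM⟩ := hbdd
    cases t with
    | some lam =>
      have hca : ContinuousAt f lam := by
        cases μ with
        | some ν =>
          have hne : lam ≠ ν := fun h => hμt (by rw [h])
          exact hf.2.1.continuousAt (isOpen_compl_singleton.mem_nhds (by simpa using hne))
        | none => exact hf.2.1.continuousAt
      refine ⟨fun _ => f lam, fun x => f x - f lam, (CRdot.const (f lam)).so,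
        ⟨⟨M + ‖f lam‖, fun x => (norm_sub_le _ _).trans (add_le_add (hM x) le_rfl)⟩, ?_⟩,
        fun x => by ring⟩
      have h1 : Tendsto (fun x => f x - f lam) (𝓝 lam) (𝓝 (f lam - f lam)) :=
        hca.tendsto.sub tendsto_const_nhds
      rw [sub_self] at h1
      exact h1.mono_left nhdsWithin_le_nhds
    | none =>
      cases μ with
      | none => exact absurd rfl hμt
      | some ν =>
        obtain ⟨hb, hc, ⟨L, hL⟩, hs⟩ := hf
        refine ⟨fun _ => L, fun x => f x - L, (CRdot.const L).so,
          ⟨⟨M + ‖L‖, fun x => (norm_sub_le _ _).trans (add_le_add (hM x) le_rfl)⟩, ?_⟩,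
          fun x => by ring⟩
        have h1 : Tendsto (fun x => f x - L) (cocompact ℝ) (𝓝 (L - L)) :=
          hL.sub tendsto_const_nhds
        rwa [sub_self] at h1

lemma SOgen.decomp {g : ℝ → ℂ} (hg : SOgen g) (t : Option ℝ) :
    ∃ h r, SO t h ∧ Vanish t r ∧ ∀ x, g x = h x + r x := by
  induction hg with
  | base μ f hf => exact decomp_base t μ f hf
  | add hf' hg' ihf ihg =>
    obtain ⟨h1, r1, H1, V1, E1⟩ := ihf
    obtain ⟨h2, r2, H2, V2, E2⟩ := ihg
    exact ⟨fun x => h1 x + h2 x, fun x => r1 x + r2 x, H1.add H2, V1.add V2,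
      fun x => by simp only [E1, E2]; ring⟩
  | mul hf' hg' ihf ihg =>
    obtain ⟨h1, r1, H1, V1, E1⟩ := ihf
    obtain ⟨h2, r2, H2, V2, E2⟩ := ihg
    refine ⟨fun x => h1 x * h2 x,
      fun x => h1 x * r2 x + (r1 x * h2 x + r1 x * r2 x), H1.mul H2,
      (Vanish.bdd_mul H1.bdd V2).add ((V1.mul_bdd H2.bdd).add (V1.mul_bdd V2.bdd)),
      fun x => by simp only [E1, E2]; ring⟩
  | smul c hf' ihf =>
    obtain ⟨h1, r1, H1, V1, E1⟩ := ihf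
    exact ⟨fun x => c * h1 x, fun x => c * r1 x, ((CRdot.const c).so).mul H1,
      Vanish.bdd_mul ⟨‖c‖, fun _ => le_rfl⟩ V1, fun x => by simp only [E1]; ring⟩
  | star hf' ihf =>
    obtain ⟨h1, r1, H1, V1, E1⟩ := ihf
    exact ⟨fun x => (starRingEnd ℂ) (h1 x), fun x => (starRingEnd ℂ) (r1 x), H1.conj,
      V1.conj, fun x => by simp only [E1, map_add]⟩

end Vanish

section Assemble

lemma assemble (t : Option ℝ) (η : CharOn {f | SO t f}) (x g h r : ℝ → ℂ) (bR : ℝ → ℝ)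
    (ε : ℝ) (hε : 0 < ε)
    (hxg : eLpNorm (fun s => x s - g s) ⊤ volume < ENNReal.ofReal (ε / 2))
    (hgd : ∀ s, g s = h s + r s)
    (hh : SO t h)
    (hbcr : CRdot (fun s => ((bR s : ℝ) : ℂ)))
    (hb0 : ∀ s, 0 ≤ bR s)
    (hb1 : ∀ s, bR s ≤ 1)
    (hrsmall : ∀ᵐ s ∂volume, bR s = 0 ∨ ‖r s‖ ≤ ε / 4)
    (hφ : η.φ (fun s => ((bR s : ℝ) : ℂ)) = 1)
    (I : Set ℝ) (hIvol : 0 < volume I) (hI1 : ∀ s ∈ I, bR s = 1) :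
    ∃ b y : ℝ → ℂ, SO t b ∧ SO t y ∧ IsPositiveIn {f | SO t f} b ∧
      ‖η.φ b‖ = 1 ∧ eLpNorm b ⊤ volume = 1 ∧
      eLpNorm (fun s => b s * x s * b s - y s) ⊤ volume < ENNReal.ofReal ε := by
  set b : ℝ → ℂ := fun s => ((bR s : ℝ) : ℂ) with hbdef
  have hbso : SO t b := hbcr.so
  have hbnorm : ∀ s, ‖b s‖ ≤ 1 := fun s => by
    simp only [hbdef, Complex.norm_real, Real.norm_eq_abs, abs_of_nonneg (hb0 s)]
    exact hb1 s
  refine ⟨b, fun s => b s * (b s * h s), hbso, hbso.mul (hbso.mul hh), ?_, ?_, ?_, ?_⟩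
  · -- positivity
    constructor
    · intro s; simp [hbdef]
    · intro z hz
      by_contra hcon
      simp only [mem_setOf_eq] at hcon
      set c : ℝ := max (-z.re) |z.im| with hcdef
      have hc0 : 0 < c := by
        rw [not_and_or] at hcon
        rcases hcon with h' | h'
        · push_neg at h'
          exact lt_max_of_lt_left (by linarith)
        · exact lt_max_of_lt_right (abs_pos.mpr h')
      have hlow : ∀ s, c ≤ ‖b s - z‖ := by
        intro s
        apply max_le
        · rcases le_or_gt (-z.re) 0 with h' | h'
          · exact h'.trans (norm_nonneg _)
          · have h2 : -z.re ≤ (b s - z).re := by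
              simp only [hbdef, Complex.sub_re, Complex.ofReal_re]
              linarith [hb0 s]
            calc -z.re ≤ (b s - z).re := h2
              _ ≤ |(b s - z).re| := le_abs_self _
              _ ≤ ‖b s - z‖ := by exact Complex.abs_re_le_norm _
        · have h2 : (b s - z).im = -z.im := by simp [hbdef]
          calc |z.im| = |(b s - z).im| := by rw [h2, abs_neg]
            _ ≤ ‖b s - z‖ := by exact Complex.abs_im_le_norm _
      have hne : ∀ s, b s - z ≠ 0 := by
        intro s h0
        have h3 := hlow s
        rw [h0, norm_zero] at h3
        linarith
      apply hz
      refine ⟨fun s => (b s - z)⁻¹, ?_,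
        Filter.EventuallyEq.of_eq (funext fun s => mul_inv_cancel₀ (hne s))⟩
      have hcr : CRdot (fun s => (b s - z)⁻¹) := by
        obtain ⟨hbc, L, hL⟩ := hbcr
        have hLtend : Tendsto (fun s => b s - z) (cocompact ℝ) (𝓝 (L - z)) :=
          hL.sub tendsto_const_nhds
        have hLz : L - z ≠ 0 := by
          have hc2 : c ≤ ‖L - z‖ := ge_of_tendsto' hLtend.norm fun s => hlow s
          exact norm_pos_iff.mp (lt_of_lt_of_le hc0 hc2)
        exact ⟨(hbc.sub continuous_const).inv₀ hne, (L - z)⁻¹, hLtend.inv₀ hLz⟩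
      exact mem_setOf.mpr hcr.so
  · rw [hφ]; norm_num
  · have hub : eLpNormEssSup b volume ≤ 1 := by
      have h1 := eLpNormEssSup_le_of_ae_bound (μ := volume) (C := 1) (ae_of_all _ hbnorm)
      simpa using h1
    have hlb : (1 : ENNReal) ≤ eLpNormEssSup b volume := by
      by_contra hlt
      push_neg at hlt
      have hae := enorm_ae_le_eLpNormEssSup b volume
      have hnotI : ∀ᵐ s ∂volume, s ∉ I := by
        filter_upwards [hae] with s hs hsI
        have hb1s : b s = 1 := by simp only [hbdef]; rw [hI1 s hsI, Complex.ofReal_one]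
        rw [hb1s] at hs
        simp only [nnnorm_one, ENNReal.coe_one, enorm_one] at hs
        exact absurd (lt_of_le_of_lt hs hlt) (lt_irrefl _)
      rw [ae_iff] at hnotI
      simp only [not_not] at hnotI
      rw [setOf_mem_eq] at hnotI
      exact absurd hnotI hIvol.ne'
    rw [eLpNorm_exponent_top]
    exact le_antisymm hub hlb
  · set A := eLpNormEssSup (fun s => x s - g s) volume with hAdef
    have hpt : ∀ᵐ s ∂volume,
        (‖b s * x s * b s - b s * (b s * h s)‖₊ : ENNReal) ≤ A + ENNReal.ofReal (ε / 4) := by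
      filter_upwards [enorm_ae_le_eLpNormEssSup (fun s => x s - g s) volume, hrsmall]
        with s h1 h2
      have hre : ‖b s * x s * b s - b s * (b s * h s)‖ ≤ ‖x s - g s‖ + ε / 4 := by
        rcases h2 with h2 | h2
        · have hbs : b s = 0 := by simp only [hbdef]; rw [h2, Complex.ofReal_zero]
          rw [hbs]
          simp only [zero_mul, mul_zero, sub_zero, norm_zero]
          positivity
        · have hkey : b s * x s * b s - b s * (b s * h s) =
              b s * b s * (x s - g s) + b s * b s * r s := by rw [hgd s]; ring
          rw [hkey]
          have hbb : ‖b s * b s‖ ≤ 1 := by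
            rw [norm_mul]
            nlinarith [hbnorm s, norm_nonneg (b s)]
          calc ‖b s * b s * (x s - g s) + b s * b s * r s‖
              ≤ ‖b s * b s * (x s - g s)‖ + ‖b s * b s * r s‖ := norm_add_le _ _
            _ ≤ ‖x s - g s‖ + ε / 4 := by
                rw [norm_mul (b s * b s) (x s - g s), norm_mul (b s * b s) (r s)]
                have e1 : ‖b s * b s‖ * ‖x s - g s‖ ≤ 1 * ‖x s - g s‖ :=
                  mul_le_mul_of_nonneg_right hbb (norm_nonneg _)
                have e2 : ‖b s * b s‖ * ‖r s‖ ≤ 1 * ‖r s‖ :=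
                  mul_le_mul_of_nonneg_right hbb (norm_nonneg _)
                rw [one_mul] at e1 e2
                linarith
      calc (‖b s * x s * b s - b s * (b s * h s)‖₊ : ENNReal)
          = ENNReal.ofReal ‖b s * x s * b s - b s * (b s * h s)‖ := coe_nnnorm_eq _
        _ ≤ ENNReal.ofReal (‖x s - g s‖ + ε / 4) := ENNReal.ofReal_le_ofReal hre
        _ = ENNReal.ofReal ‖x s - g s‖ + ENNReal.ofReal (ε / 4) :=
            ENNReal.ofReal_add (norm_nonneg _) (by linarith)
        _ ≤ A + ENNReal.ofReal (ε / 4) := by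
            refine add_le_add ?_ le_rfl
            rw [← coe_nnnorm_eq]
            exact h1
    have hAlt : A < ENNReal.ofReal (ε / 2) := by
      rw [hAdef, ← eLpNorm_exponent_top]
      exact hxg
    calc eLpNorm (fun s => b s * x s * b s - b s * (b s * h s)) ⊤ volume
        ≤ A + ENNReal.ofReal (ε / 4) := by
          rw [eLpNorm_exponent_top]
          exact essSup_le_of_ae_le _ hpt
      _ < ENNReal.ofReal (ε / 2) + ENNReal.ofReal (ε / 4) :=
          ENNReal.add_lt_add_right (by simp) hAlt
      _ = ENNReal.ofReal (ε / 2 + ε / 4) :=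
          (ENNReal.ofReal_add (by linarith) (by linarith)).symm
      _ < ENNReal.ofReal ε := (ENNReal.ofReal_lt_ofReal_iff hε).mpr (by linarith)

end Assemble

/-- For every t ∈ Ṙ, SO^◇ is SO_t-compressible modulo every character η in the fiber
M_t(SO_t): for each x ∈ SO^◇ and ε > 0 there exist a positive b ∈ SO_t with
|η(b)| = ‖b‖ = 1 and y ∈ SO_t with ‖b x b − y‖_∞ < ε. -/
theorem SOdiamond_compressible (t : Option ℝ) (η : CharOn {f | SO t f})
    (hη : InFiber {f | SO t f} η t) (x : ℝ → ℂ) (hx : SOdiamond x)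
    (ε : ℝ) (hε : 0 < ε) :
    ∃ b y : ℝ → ℂ, SO t b ∧ SO t y ∧ IsPositiveIn {f | SO t f} b ∧
      ‖η.φ b‖ = 1 ∧ eLpNorm b ⊤ volume = 1 ∧
      eLpNorm (fun s => b s * x s * b s - y s) ⊤ volume < ENNReal.ofReal ε := by
  obtain ⟨hxmem, hxapprox⟩ := hx
  obtain ⟨g, hgen, hgx⟩ := hxapprox (ε / 2) (by linarith)
  obtain ⟨h, r, hh, hr, hgd⟩ := hgen.decomp t
  cases t with
  | some lam =>
    obtain ⟨δ, hδ, Hδ⟩ := Metric.tendsto_nhdsWithin_nhds.mp hr.2 (ε / 4) (by linarith)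
    set bR : ℝ → ℝ := fun s => min 1 (max 0 (2 - 2 * |s - lam| / δ)) with hbRdef
    have hb0 : ∀ s, 0 ≤ bR s := fun s => le_min zero_le_one (le_max_left _ _)
    have hb1 : ∀ s, bR s ≤ 1 := fun s => min_le_left _ _
    have hbsupp : ∀ s, δ ≤ |s - lam| → bR s = 0 := by
      intro s hs
      have h1 : 2 - 2 * |s - lam| / δ ≤ 0 := by
        rw [sub_nonpos, le_div_iff₀ hδ]
        linarith
      simp only [hbRdef]
      rw [max_eq_left h1, min_eq_right zero_le_one]
    have hbplateau : ∀ s, |s - lam| ≤ δ / 4 → bR s = 1 := by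
      intro s hs
      have h1 : 2 * |s - lam| / δ ≤ 1 := by
        rw [div_le_one hδ]
        linarith
      have h2 : (1:ℝ) ≤ 2 - 2 * |s - lam| / δ := by linarith
      simp only [hbRdef]
      rw [min_eq_left (le_max_of_le_right h2)]
    have hbRcont : Continuous bR := by
      have hc1 : Continuous fun s : ℝ => |s - lam| := (continuous_id.sub continuous_const).abs
      exact continuous_const.min
        (continuous_const.max (continuous_const.sub (((continuous_const.mul hc1)).div_const δ)))
    set b : ℝ → ℂ := fun s => ((bR s : ℝ) : ℂ) with hbdef
    have hbcr : CRdot b := by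
      refine ⟨Complex.continuous_ofReal.comp hbRcont, 0, ?_⟩
      have hmem : {s : ℝ | δ ≤ |s - lam|} ∈ cocompact ℝ := by
        rw [mem_cocompact]
        refine ⟨Metric.closedBall lam δ, isCompact_closedBall _ _, fun s hs => ?_⟩
        simp only [mem_compl_iff, Metric.mem_closedBall, Real.dist_eq, not_le] at hs
        exact hs.le
      have hev : b =ᶠ[cocompact ℝ] (fun _ => 0) := by
        filter_upwards [hmem] with s hs
        simp only [hbdef]
        rw [hbsupp s hs, Complex.ofReal_zero]
      exact (tendsto_congr' hev).mpr tendsto_const_nhds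
    have hbso : SO (some lam) b := hbcr.so
    have hφ : η.φ b = 1 := by
      have h1 := hη b (mem_setOf.mpr hbso) hbcr
      rw [h1]
      simp only [hbdef]
      rw [hbplateau lam (by rw [sub_self, abs_zero]; positivity), Complex.ofReal_one]
    have hrsmall : ∀ᵐ s ∂volume, bR s = 0 ∨ ‖r s‖ ≤ ε / 4 := by
      have hne : ∀ᵐ s : ℝ ∂volume, s ≠ lam := by
        rw [ae_iff]
        simp only [ne_eq, not_not]
        have h1 : {s : ℝ | s = lam} = {lam} := by ext s; simp
        rw [h1]
        exact measure_singleton lam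
      filter_upwards [hne] with s hs
      rcases le_or_gt δ |s - lam| with hd | hd
      · exact Or.inl (hbsupp s hd)
      · right
        have h1 := Hδ (mem_compl_singleton_iff.mpr hs) (by rw [Real.dist_eq]; exact hd)
        rw [dist_zero_right] at h1
        exact h1.le
    exact assemble (some lam) η x g h r bR ε hε hgx hgd hh hbcr hb0 hb1 hrsmall hφ
      (Icc (lam - δ / 4) (lam + δ / 4))
      (by rw [Real.volume_Icc]; exact ENNReal.ofReal_pos.mpr (by linarith))
      (fun s hs => hbplateau s (abs_le.mpr ⟨by linarith [hs.1], by linarith [hs.2]⟩))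
  | none =>
    have h1 : ∀ᶠ s in cocompact ℝ, dist (r s) 0 < ε / 4 :=
      Metric.tendsto_nhds.mp hr.2 (ε / 4) (by linarith)
    obtain ⟨K, hK, hKs⟩ := mem_cocompact.mp h1
    obtain ⟨R0, hR0⟩ := hK.isBounded.subset_closedBall 0
    set R1 : ℝ := max 1 |R0| with hR1def
    have hR1pos : (0:ℝ) < R1 := lt_of_lt_of_le one_pos (le_max_left _ _)
    set bR : ℝ → ℝ := fun s => min 1 (max 0 (|s| / R1 - 1)) with hbRdef
    have hb0 : ∀ s, 0 ≤ bR s := fun s => le_min zero_le_one (le_max_left _ _)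
    have hb1 : ∀ s, bR s ≤ 1 := fun s => min_le_left _ _
    have hbsupp : ∀ s, |s| ≤ R1 → bR s = 0 := by
      intro s hs
      have h2 : |s| / R1 - 1 ≤ 0 := by
        rw [sub_nonpos, div_le_one hR1pos]
        exact hs
      simp only [hbRdef]
      rw [max_eq_left h2, min_eq_right zero_le_one]
    have hbplateau : ∀ s, 2 * R1 ≤ |s| → bR s = 1 := by
      intro s hs
      have h3 : (2:ℝ) ≤ |s| / R1 := by
        rw [le_div_iff₀ hR1pos]
        linarith
      have h2 : (1:ℝ) ≤ |s| / R1 - 1 := by linarith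
      simp only [hbRdef]
      rw [min_eq_left (le_max_of_le_right h2)]
    have hbRcont : Continuous bR := by
      exact continuous_const.min
        (continuous_const.max ((continuous_abs.div_const R1).sub continuous_const))
    set b : ℝ → ℂ := fun s => ((bR s : ℝ) : ℂ) with hbdef
    have hbtend : Tendsto b (cocompact ℝ) (𝓝 1) := by
      have hmem : {s : ℝ | 2 * R1 ≤ |s|} ∈ cocompact ℝ := by
        rw [mem_cocompact]
        refine ⟨Metric.closedBall 0 (2 * R1), isCompact_closedBall _ _, fun s hs => ?_⟩
        simp only [mem_compl_iff, Metric.mem_closedBall, Real.dist_eq, sub_zero, not_le] at hs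
        exact hs.le
      have hev : b =ᶠ[cocompact ℝ] (fun _ => 1) := by
        filter_upwards [hmem] with s hs
        simp only [hbdef]
        rw [hbplateau s hs, Complex.ofReal_one]
      exact (tendsto_congr' hev).mpr tendsto_const_nhds
    have hbcr : CRdot b := ⟨Complex.continuous_ofReal.comp hbRcont, 1, hbtend⟩
    have hbso : SO none b := hbcr.so
    have hφ : η.φ b = 1 := hη b (mem_setOf.mpr hbso) hbcr 1 hbtend
    have hrsmall : ∀ᵐ s ∂volume, bR s = 0 ∨ ‖r s‖ ≤ ε / 4 := by
      refine ae_of_all _ fun s => ?_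
      rcases le_or_gt |s| R1 with hd | hd
      · exact Or.inl (hbsupp s hd)
      · right
        have hsK : s ∉ K := by
          intro hsK
          have h2 := hR0 hsK
          rw [Metric.mem_closedBall, Real.dist_eq, sub_zero] at h2
          have h3 : |R0| ≤ R1 := le_max_right _ _
          have h4 := le_abs_self R0
          linarith
        have h2 := hKs hsK
        simp only [mem_setOf_eq] at h2
        rw [dist_zero_right] at h2
        exact h2.le
    exact assemble none η x g h r bR ε hε hgx hgd hh hbcr hb0 hb1 hrsmall hφ
      (Icc (2 * R1) (3 * R1))
      (by rw [Real.volume_Icc]; exact ENNReal.ofReal_pos.mpr (by linarith))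
      (fun s hs => hbplateau s (le_abs.mpr (Or.inl hs.1)))
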